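/- Let T be a bounded linear operator on a complex Hilbert space, α ∈ [0,1], r ≥ 1. Then w(T)^{4r} ≤ (α/8)·‖|T|^{4r} + |T*|^{4r}‖ + (α/4)·w(|T*|^{2r}|T|^{2r}) + (α/2)·w(T²)^{2r} + ((1−α)/4)·‖|T|^{2r} + |T*|^{2r}‖·w(T)^{2r} + ((1−α)/2)·w(T²)^r·w(T)^{2r}. -/

import Mathlib

open scoped InnerProductSpace NNReal
open ContinuousLinearMap

variable {H : Type*} [NormedAddCommGroup H] [InnerProductSpace ℂ H]

noncomputable def numRadius [CompleteSpace H] (T : H →L[ℂ] H) : ℝ :=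
  ⨆ x : {x : H // ‖x‖ = 1}, ‖⟪T x, (x : H)⟫_ℂ‖

noncomputable def opAbs [CompleteSpace H] (T : H →L[ℂ] H) : H →L[ℂ] H :=
  CFC.sqrt (ContinuousLinearMap.adjoint T * T)

set_option linter.unusedSectionVars false
set_option maxHeartbeats 1000000

/-! ### Scalar helper lemmas -/

private lemma my_rpow_two_mul {m : ℝ} (hm : 0 ≤ m) (r : ℝ) : m ^ (2*r) = (m^2)^r := by
  rw [show (2*r) = (2:ℕ)*r by norm_num, Real.rpow_natCast_mul hm]

private lemma my_sq_rpow {m : ℝ} (hm : 0 ≤ m) (r : ℝ) : (m^r)^2 = m^(2*r) := by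
  rw [show (2*r) = r*(2:ℕ) by push_cast; ring, Real.rpow_mul_natCast hm]

private lemma my_half_rpow {u v : ℝ} (hu : 0 ≤ u) (hv : 0 ≤ v) {p : ℝ} (hp : 1 ≤ p) :
    ((u+v)/2)^p ≤ (u^p + v^p)/2 := by
  have h := NNReal.rpow_arith_mean_le_arith_mean2_rpow (1/2) (1/2)
    u.toNNReal v.toNNReal (add_halves 1) hp
  rw [← NNReal.coe_le_coe] at h
  push_cast [NNReal.coe_rpow, Real.coe_toNNReal u hu, Real.coe_toNNReal v hv] at h
  calc ((u+v)/2)^p = (1/2*u + 1/2*v)^p := by ring_nf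
  _ ≤ 1/2*u^p + 1/2*v^p := h
  _ = (u^p + v^p)/2 := by ring

private lemma my_young {t c s : ℝ} (ht : 0 ≤ t) (hc : 0 ≤ c) (hs : 1 ≤ s) :
    s * (c^(s-1) * t) ≤ t^s + (s-1) * c^s := by
  have hs0 : (0:ℝ) < s := by linarith
  have h := Real.geom_mean_le_arith_mean2_weighted
    (w₁ := 1/s) (w₂ := 1 - 1/s) (p₁ := t^s) (p₂ := c^s)
    (by positivity)
    (by rw [sub_nonneg, div_le_one hs0]; linarith)
    (by positivity) (by positivity) (by ring)
  have e1 : (t^s)^(1/s) = t := by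
    rw [← Real.rpow_mul ht, mul_one_div_cancel hs0.ne', Real.rpow_one]
  have e2 : (c^s)^(1-1/s) = c^(s-1) := by
    rw [← Real.rpow_mul hc, show s*(1-1/s) = s-1 by field_simp]
  rw [e1, e2] at h
  have key : s*(1/s*t^s + (1-1/s)*c^s) = t^s + (s-1)*c^s := by
    field_simp
  nlinarith [mul_le_mul_of_nonneg_left h hs0.le]

private lemma my_conj_two_mul (z : ℂ) : (starRingEnd ℂ) (2 * z) = 2 * (starRingEnd ℂ) z := by
  rw [map_mul, map_ofNat]

/-- Buzano's inequality. -/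
private lemma my_buzano (a b e : H) (he : ‖e‖ = 1) :
    ‖⟪a,e⟫_ℂ * ⟪e,b⟫_ℂ‖ ≤ (‖a‖*‖b‖ + ‖⟪a,b⟫_ℂ‖)/2 := by
  set a' : H := (2*⟪e,a⟫_ℂ) • e - a with ha'
  have h1 : ⟪a',b⟫_ℂ = 2*(⟪a,e⟫_ℂ*⟪e,b⟫_ℂ) - ⟪a,b⟫_ℂ := by
    rw [ha', inner_sub_left, inner_smul_left, my_conj_two_mul, inner_conj_symm]
    ring
  have h2 : ‖a'‖ = ‖a‖ := by
    have hsq : ‖a'‖^2 = ‖a‖^2 := by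
      rw [ha', @norm_sub_sq ℂ]
      have h3 : ‖(2*⟪e,a⟫_ℂ) • e‖^2 = 4 * ‖⟪e,a⟫_ℂ‖^2 := by
        rw [norm_smul, he]
        simp [norm_mul]; ring
      have h4 : RCLike.re ⟪(2*⟪e,a⟫_ℂ) • e, a⟫_ℂ = 2 * ‖⟪e,a⟫_ℂ‖^2 := by
        rw [inner_smul_left, my_conj_two_mul, mul_assoc, RCLike.conj_mul]
        have : ((2:ℂ) * (‖⟪e,a⟫_ℂ‖:ℂ)^2).re = 2 * ‖⟪e,a⟫_ℂ‖^2 := by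
          simp [← Complex.ofReal_pow]
        simpa using this
      rw [h3, h4]; ring
    nlinarith [norm_nonneg a', norm_nonneg a]
  have h5 : 2 * ‖⟪a,e⟫_ℂ*⟪e,b⟫_ℂ‖ = ‖⟪a',b⟫_ℂ + ⟪a,b⟫_ℂ‖ := by
    rw [h1, sub_add_cancel]
    rw [show (2:ℝ) * ‖⟪a,e⟫_ℂ*⟪e,b⟫_ℂ‖ = ‖(2:ℂ)‖ * ‖⟪a,e⟫_ℂ*⟪e,b⟫_ℂ‖ by norm_num]
    rw [← norm_mul]
  have h6 : ‖⟪a',b⟫_ℂ + ⟪a,b⟫_ℂ‖ ≤ ‖a‖*‖b‖ + ‖⟪a,b⟫_ℂ‖ := by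
    refine (norm_add_le _ _).trans ?_
    gcongr
    calc ‖⟪a',b⟫_ℂ‖ ≤ ‖a'‖ * ‖b‖ := norm_inner_le_norm _ _
    _ = ‖a‖ * ‖b‖ := by rw [h2]
  linarith

/-! ### Operator helper lemmas -/

section helpers
variable [CompleteSpace H]

private lemma numRadius_nonneg (T : H →L[ℂ] H) : 0 ≤ numRadius T :=
  Real.iSup_nonneg fun _ => norm_nonneg _

private lemma le_numRadius (T : H →L[ℂ] H) {x : H} (hx : ‖x‖ = 1) :
    ‖⟪T x, x⟫_ℂ‖ ≤ numRadius T := by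
  refine le_ciSup_of_le ?_ (⟨x, hx⟩ : {x : H // ‖x‖ = 1}) le_rfl
  refine ⟨‖T‖, ?_⟩
  rintro - ⟨y, rfl⟩
  calc ‖⟪T y, (y:H)⟫_ℂ‖ ≤ ‖T (y:H)‖ * ‖(y:H)‖ := norm_inner_le_norm _ _
  _ ≤ ‖T‖ * ‖(y:H)‖ * ‖(y:H)‖ := by gcongr; exact le_opNorm T y
  _ = ‖T‖ := by rw [y.2]; ring

private lemma numRadius_rpow_le (T : H →L[ℂ] H) {p X : ℝ} (hp : 0 < p) (hX : 0 ≤ X)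
    (h : ∀ x : H, ‖x‖ = 1 → ‖⟪T x, x⟫_ℂ‖ ^ p ≤ X) : numRadius T ^ p ≤ X := by
  have h2 : numRadius T ≤ X ^ p⁻¹ := by
    refine Real.iSup_le (fun y => ?_) (Real.rpow_nonneg hX _)
    have h3 := h y y.2
    calc ‖⟪T y, (y:H)⟫_ℂ‖ = (‖⟪T y, (y:H)⟫_ℂ‖ ^ p) ^ p⁻¹ :=
        (Real.rpow_rpow_inv (norm_nonneg _) hp.ne').symm
    _ ≤ X ^ p⁻¹ := Real.rpow_le_rpow (Real.rpow_nonneg (norm_nonneg _) _) h3 (by positivity)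
  calc numRadius T ^ p ≤ (X ^ p⁻¹) ^ p :=
      Real.rpow_le_rpow (numRadius_nonneg T) h2 hp.le
  _ = X := Real.rpow_inv_rpow hX hp.ne'

private lemma my_inner_mono {S₁ S₂ : H →L[ℂ] H} (h : S₁ ≤ S₂) (x : H) :
    RCLike.re ⟪S₁ x, x⟫_ℂ ≤ RCLike.re ⟪S₂ x, x⟫_ℂ := by
  have h2 := ((ContinuousLinearMap.le_def S₁ S₂).mp h).inner_nonneg_left x
  rw [ContinuousLinearMap.sub_apply, inner_sub_left] at h2
  have h3 := (RCLike.nonneg_iff.mp h2).1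
  rw [map_sub] at h3
  linarith

private lemma my_inner_nonneg {S : H →L[ℂ] H} (h : 0 ≤ S) (x : H) :
    0 ≤ RCLike.re ⟪S x, x⟫_ℂ := by simpa using my_inner_mono h x

private lemma my_re_inner_le_norm (S : H →L[ℂ] H) {x : H} (hx : ‖x‖ = 1) :
    RCLike.re ⟪S x, x⟫_ℂ ≤ ‖S‖ := by
  calc RCLike.re ⟪S x, x⟫_ℂ ≤ ‖⟪S x, x⟫_ℂ‖ := RCLike.re_le_norm _
  _ ≤ ‖S x‖ * ‖x‖ := norm_inner_le_norm _ _
  _ ≤ ‖S‖ * ‖x‖ * ‖x‖ := by gcongr; exact le_opNorm S x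
  _ = ‖S‖ := by rw [hx]; ring

private lemma my_adjoint_mul_self_nonneg (T : H →L[ℂ] H) : 0 ≤ adjoint T * T := by
  rw [ContinuousLinearMap.nonneg_iff_isPositive]
  constructor
  · rw [← ContinuousLinearMap.isSelfAdjoint_iff_isSymmetric, IsSelfAdjoint, star_mul, star_eq_adjoint, star_eq_adjoint, adjoint_adjoint]
  · intro x
    rw [reApplyInnerSelf, ContinuousLinearMap.mul_apply, adjoint_inner_left,
      inner_self_eq_norm_sq]
    positivity

private lemma my_selfAdjoint_of_nonneg {S : H →L[ℂ] H} (h : 0 ≤ S) : adjoint S = S := by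
  rw [← star_eq_adjoint]
  exact IsSelfAdjoint.of_nonneg h

private lemma my_rpow_inner_eq_sq {B : H →L[ℂ] H} (hB : 0 ≤ B) {s : ℝ} (hs : 0 < s) (x : H) :
    RCLike.re ⟪(B ^ (2*s)) x, x⟫_ℂ = ‖(B ^ s) x‖^2 := by
  have h1 : B ^ (2*s) = (B ^ s) * (B ^ s) := by
    rw [show (2*s) = s * 2 by ring, ← CFC.rpow_rpow_of_exponent_nonneg B s 2 hs.le (by norm_num) hB,
      show ((2:ℝ)) = ((2:ℕ):ℝ) by norm_num,
      CFC.rpow_natCast (B ^ s) 2 CFC.rpow_nonneg, pow_two]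
  rw [h1, ContinuousLinearMap.mul_apply, ← adjoint_inner_right,
    my_selfAdjoint_of_nonneg (CFC.rpow_nonneg (a := B) (y := s)),
    inner_self_eq_norm_sq]

private lemma my_opAbs_rpow (T : H →L[ℂ] H) {y : ℝ} (hy : 0 ≤ y) :
    opAbs T ^ (2 * y) = (adjoint T * T) ^ y := by
  rw [opAbs, CFC.sqrt_eq_rpow,
    CFC.rpow_rpow_of_exponent_nonneg _ _ _ (by norm_num) (by positivity)
      (my_adjoint_mul_self_nonneg T)]
  congr 1
  ring

/-- McCarthy's inequality. -/
private lemma my_mccarthy {B : H →L[ℂ] H} (hB : 0 ≤ B) {s : ℝ} (hs : 1 ≤ s) {x : H}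
    (hx : ‖x‖ = 1) :
    (RCLike.re ⟪B x, x⟫_ℂ) ^ s ≤ RCLike.re ⟪(B ^ s) x, x⟫_ℂ := by
  have hs0 : (0:ℝ) < s := by linarith
  set cr : ℝ := RCLike.re ⟪B x, x⟫_ℂ with hcr_def
  have hcr : 0 ≤ cr := my_inner_nonneg hB x
  have hBs : (0:H →L[ℂ] H) ≤ B ^ s := CFC.rpow_nonneg
  rcases eq_or_lt_of_le hcr with h0 | hpos
  · rw [← h0, Real.zero_rpow hs0.ne']
    exact my_inner_nonneg hBs x
  have hc' : ((Real.toNNReal cr) : ℝ) = cr := Real.coe_toNNReal cr hcr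
  have hs'c : ((Real.toNNReal s) : ℝ) = s := Real.coe_toNNReal s hs0.le
  have hs'1 : 1 ≤ Real.toNNReal s := by
    rw [← NNReal.coe_le_coe, hs'c]; exact_mod_cast hs
  set c' : ℝ≥0 := Real.toNNReal cr
  set s' : ℝ≥0 := Real.toNNReal s
  have hscalar : ∀ t : ℝ≥0, (s' * c' ^ (s-1)) * t ≤ t ^ s + (s' - 1) * c' ^ s := by
    intro t
    rw [← NNReal.coe_le_coe]
    push_cast [NNReal.coe_rpow, NNReal.coe_sub hs'1, hs'c, hc']
    nlinarith [my_young (t := (t:ℝ)) (c := cr) t.coe_nonneg hcr hs]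
  have hop : (s' * c' ^ (s-1)) • B ≤ B ^ s + ((s' - 1) * c' ^ s) • (1 : H →L[ℂ] H) := by
    have hcont1 : ContinuousOn (fun t : ℝ≥0 => (s' * c' ^ (s-1)) * t) (spectrum ℝ≥0 B) := by
      fun_prop
    have hcont2 : ContinuousOn (fun t : ℝ≥0 => t ^ s + (s' - 1) * c' ^ s) (spectrum ℝ≥0 B) :=
      ((NNReal.continuous_rpow_const hs0.le).add continuous_const).continuousOn
    have h0 := cfc_mono (a := B) (fun t _ => hscalar t) hcont1 hcont2
    rw [cfc_const_mul_id _ B hB] at h0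
    rwa [cfc_add (a := B) _ _ ((NNReal.continuous_rpow_const hs0.le).continuousOn)
        continuous_const.continuousOn,
      ← CFC.rpow_def, cfc_const _ B hB, Algebra.algebraMap_eq_smul_one] at h0
  have hineq := my_inner_mono hop x
  have hL : RCLike.re ⟪((s' * c' ^ (s-1)) • B) x, x⟫_ℂ = ((s' * c' ^ (s-1) : ℝ≥0):ℝ) * cr := by
    rw [NNReal.smul_def, ContinuousLinearMap.smul_apply,
      RCLike.real_smul_eq_coe_smul (K := ℂ), inner_smul_real_left]
    simp
    exact Or.inl rfl
  have hR : RCLike.re ⟪(B ^ s + ((s' - 1) * c' ^ s) • (1 : H →L[ℂ] H)) x, x⟫_ℂ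
      = RCLike.re ⟪(B ^ s) x, x⟫_ℂ + (((s' - 1) * c' ^ s : ℝ≥0):ℝ) := by
    rw [ContinuousLinearMap.add_apply, inner_add_left, map_add]
    congr 1
    rw [NNReal.smul_def, ContinuousLinearMap.smul_apply,
      RCLike.real_smul_eq_coe_smul (K := ℂ), inner_smul_real_left,
      ContinuousLinearMap.one_apply]
    have h1 : RCLike.re ⟪x, x⟫_ℂ = 1 := by rw [inner_self_eq_norm_sq, hx]; norm_num
    have h1' : (⟪x, x⟫_ℂ).re = 1 := h1
    simp [h1', hx]
  rw [hL, hR] at hineq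
  have hkc : ((s' * c' ^ (s-1) : ℝ≥0):ℝ) = s * cr ^ (s-1) := by
    push_cast [NNReal.coe_rpow, hs'c, hc']; ring
  have he'c : (((s' - 1) * c' ^ s : ℝ≥0):ℝ) = (s-1) * cr ^ s := by
    push_cast [NNReal.coe_rpow, NNReal.coe_sub hs'1, hs'c, hc']; ring
  rw [hkc, he'c] at hineq
  have hpow : cr ^ (s-1) * cr = cr ^ s := by
    rw [← Real.rpow_add_one hpos.ne' (s-1)]; norm_num
  nlinarith [hineq, hpow]

private lemma my_normsq_inner (T : H →L[ℂ] H) (x : H) :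
    ‖T x‖^2 = RCLike.re ⟪(adjoint T * T) x, x⟫_ℂ := by
  rw [ContinuousLinearMap.mul_apply, adjoint_inner_left, inner_self_eq_norm_sq]

private lemma my_norm_rpow_le (T : H →L[ℂ] H) {r : ℝ} (hr : 1 ≤ r) {x : H} (hx : ‖x‖ = 1) :
    ‖T x‖ ^ (2*r) ≤ RCLike.re ⟪((adjoint T * T) ^ r) x, x⟫_ℂ := by
  rw [my_rpow_two_mul (norm_nonneg _), my_normsq_inner]
  exact my_mccarthy (my_adjoint_mul_self_nonneg T) hr hx

end helpers

/-! ### Pointwise lemmas -/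

section pointwise
variable [CompleteSpace H]

private lemma my_P1 (T : H →L[ℂ] H) {r : ℝ} (hr : 1 ≤ r) {x : H} (hx : ‖x‖ = 1) :
    ‖⟪T x, x⟫_ℂ‖ ^ (2*r) ≤
      ((‖T x‖ * ‖adjoint T x‖)^r + ‖⟪(T^2) x, x⟫_ℂ‖^r)/2 := by
  have hr0 : (0:ℝ) < r := by linarith
  have hsq : (T^2) x = T (T x) := by rw [pow_two]; rfl
  have hA : ‖⟪T x, x⟫_ℂ‖^2 ≤ (‖T x‖ * ‖adjoint T x‖ + ‖⟪(T^2) x, x⟫_ℂ‖)/2 := by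
    have hb := my_buzano (T x) (adjoint T x) x hx
    have h1 : ⟪x, adjoint T x⟫_ℂ = ⟪T x, x⟫_ℂ := adjoint_inner_right T x x
    have h2 : ⟪T x, adjoint T x⟫_ℂ = ⟪(T^2) x, x⟫_ℂ := by
      rw [hsq]; exact adjoint_inner_right T (T x) x
    rw [h1, h2] at hb
    calc ‖⟪T x, x⟫_ℂ‖^2 = ‖⟪T x, x⟫_ℂ * ⟪T x, x⟫_ℂ‖ := by rw [norm_mul, pow_two]
    _ ≤ _ := hb
  calc ‖⟪T x, x⟫_ℂ‖ ^ (2*r) = (‖⟪T x, x⟫_ℂ‖^2)^r := my_rpow_two_mul (norm_nonneg _) r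
  _ ≤ ((‖T x‖ * ‖adjoint T x‖ + ‖⟪(T^2) x, x⟫_ℂ‖)/2)^r :=
      Real.rpow_le_rpow (sq_nonneg _) hA hr0.le
  _ ≤ ((‖T x‖ * ‖adjoint T x‖)^r + ‖⟪(T^2) x, x⟫_ℂ‖^r)/2 :=
      my_half_rpow (by positivity) (norm_nonneg _) hr

private lemma my_P2 (T : H →L[ℂ] H) {r : ℝ} (hr : 1 ≤ r) {x : H} (hx : ‖x‖ = 1) :
    (‖T x‖ * ‖adjoint T x‖)^r ≤
      ‖(adjoint T * T)^r + (T * adjoint T)^r‖/2 := by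
  have hβ := my_norm_rpow_le T hr hx
  have hγ := my_norm_rpow_le (adjoint T) hr hx
  rw [adjoint_adjoint] at hγ
  have hsum : RCLike.re ⟪((adjoint T * T) ^ r) x, x⟫_ℂ + RCLike.re ⟪((T * adjoint T) ^ r) x, x⟫_ℂ
      = RCLike.re ⟪((adjoint T * T)^r + (T * adjoint T)^r) x, x⟫_ℂ := by
    rw [ContinuousLinearMap.add_apply, inner_add_left, map_add]
  have hnorm := my_re_inner_le_norm ((adjoint T * T)^r + (T * adjoint T)^r) hx
  have e1 : (‖T x‖ * ‖adjoint T x‖)^r = ‖T x‖^r * ‖adjoint T x‖^r :=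
    Real.mul_rpow (norm_nonneg _) (norm_nonneg _)
  have e2 : (‖T x‖^r)^2 = ‖T x‖^(2*r) := my_sq_rpow (norm_nonneg _) r
  have e3 : (‖adjoint T x‖^r)^2 = ‖adjoint T x‖^(2*r) := my_sq_rpow (norm_nonneg _) r
  nlinarith [sq_nonneg (‖T x‖^r - ‖adjoint T x‖^r)]

private lemma my_P3 (T : H →L[ℂ] H) {r : ℝ} (hr : 1 ≤ r) {x : H} (hx : ‖x‖ = 1) :
    ((‖T x‖ * ‖adjoint T x‖)^r)^2 ≤
      ‖(adjoint T * T)^(2*r) + (T * adjoint T)^(2*r)‖/4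
        + numRadius ((T * adjoint T)^r * (adjoint T * T)^r)/2 := by
  have hr0 : (0:ℝ) < r := by linarith
  have hB : (0:H →L[ℂ] H) ≤ adjoint T * T := my_adjoint_mul_self_nonneg T
  have hC : (0:H →L[ℂ] H) ≤ T * adjoint T := by
    have := my_adjoint_mul_self_nonneg (adjoint T)
    rwa [adjoint_adjoint] at this
  set B : H →L[ℂ] H := adjoint T * T
  set C : H →L[ℂ] H := T * adjoint T
  have hβ := my_norm_rpow_le T hr hx
  have hγ := my_norm_rpow_le (adjoint T) hr hx
  rw [adjoint_adjoint] at hγ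
  have hβ0 : 0 ≤ RCLike.re ⟪(B ^ r) x, x⟫_ℂ := my_inner_nonneg CFC.rpow_nonneg x
  have hγ0 : 0 ≤ RCLike.re ⟪(C ^ r) x, x⟫_ℂ := my_inner_nonneg CFC.rpow_nonneg x
  -- step 1: LHS ≤ β * γ
  have step1 : ((‖T x‖ * ‖adjoint T x‖)^r)^2
      ≤ RCLike.re ⟪(B ^ r) x, x⟫_ℂ * RCLike.re ⟪(C ^ r) x, x⟫_ℂ := by
    have e1 : ((‖T x‖ * ‖adjoint T x‖)^r)^2 = ‖T x‖^(2*r) * ‖adjoint T x‖^(2*r) := by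
      rw [Real.mul_rpow (norm_nonneg _) (norm_nonneg _), mul_pow,
        my_sq_rpow (norm_nonneg _) r, my_sq_rpow (norm_nonneg _) r]
    rw [e1]
    exact mul_le_mul hβ hγ (by positivity) hβ0
  -- step 2: β * γ ≤ ‖⟪B^r x, x⟫ * ⟪x, C^r x⟫‖
  have step2 : RCLike.re ⟪(B ^ r) x, x⟫_ℂ * RCLike.re ⟪(C ^ r) x, x⟫_ℂ
      ≤ ‖⟪(B ^ r) x, x⟫_ℂ * ⟪x, (C ^ r) x⟫_ℂ‖ := by
    rw [norm_mul]
    have g1 : RCLike.re ⟪(B ^ r) x, x⟫_ℂ ≤ ‖⟪(B ^ r) x, x⟫_ℂ‖ := RCLike.re_le_norm _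
    have g2 : RCLike.re ⟪(C ^ r) x, x⟫_ℂ ≤ ‖⟪x, (C ^ r) x⟫_ℂ‖ := by
      rw [← inner_re_symm]
      exact RCLike.re_le_norm _
    exact mul_le_mul g1 g2 hγ0 (norm_nonneg _)
  -- step 3: Buzano
  have step3 := my_buzano ((B ^ r) x) ((C ^ r) x) x hx
  -- step 4: bound ‖B^r x‖ * ‖C^r x‖
  have e4 : ‖(B ^ r) x‖^2 = RCLike.re ⟪(B ^ (2*r)) x, x⟫_ℂ := (my_rpow_inner_eq_sq hB hr0 x).symm
  have e5 : ‖(C ^ r) x‖^2 = RCLike.re ⟪(C ^ (2*r)) x, x⟫_ℂ := (my_rpow_inner_eq_sq hC hr0 x).symm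
  have e6 : RCLike.re ⟪(B ^ (2*r)) x, x⟫_ℂ + RCLike.re ⟪(C ^ (2*r)) x, x⟫_ℂ
      = RCLike.re ⟪(B ^ (2*r) + C ^ (2*r)) x, x⟫_ℂ := by
    rw [ContinuousLinearMap.add_apply, inner_add_left, map_add]
  have e7 := my_re_inner_le_norm (B ^ (2*r) + C ^ (2*r)) hx
  have step4 : ‖(B ^ r) x‖ * ‖(C ^ r) x‖ ≤ ‖B ^ (2*r) + C ^ (2*r)‖/2 := by
    nlinarith [sq_nonneg (‖(B ^ r) x‖ - ‖(C ^ r) x‖)]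
  -- step 5: the cross term
  have step5 : ‖⟪(B ^ r) x, (C ^ r) x⟫_ℂ‖ ≤ numRadius (C ^ r * B ^ r) := by
    have e8 : ⟪(C ^ r * B ^ r) x, x⟫_ℂ = ⟪(B ^ r) x, (C ^ r) x⟫_ℂ := by
      rw [ContinuousLinearMap.mul_apply]
      calc ⟪(C ^ r) ((B ^ r) x), x⟫_ℂ
          = ⟪(adjoint (C ^ r)) ((B ^ r) x), x⟫_ℂ := by
            rw [my_selfAdjoint_of_nonneg (CFC.rpow_nonneg (a := C) (y := r))]
      _ = ⟪(B ^ r) x, (C ^ r) x⟫_ℂ := adjoint_inner_left _ _ _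
    rw [← e8]
    exact le_numRadius _ hx
  linarith [step1, step2, step3, step4, step5]

end pointwise

/-! ### The two main bounds -/

section main
variable [CompleteSpace H]

private lemma my_key_X (T : H →L[ℂ] H) {r : ℝ} (hr : 1 ≤ r) :
    numRadius T ^ (4*r) ≤
      ‖(adjoint T * T)^(2*r) + (T * adjoint T)^(2*r)‖/8
        + numRadius ((T * adjoint T)^r * (adjoint T * T)^r)/4
        + numRadius (T^2) ^ (2*r)/2 := by
  have hr0 : (0:ℝ) < r := by linarith
  refine numRadius_rpow_le T (by positivity) ?_ ?_
  · have n1 : (0:ℝ) ≤ ‖(adjoint T * T)^(2*r) + (T * adjoint T)^(2*r)‖ := norm_nonneg _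
    have n2 := numRadius_nonneg ((T * adjoint T)^r * (adjoint T * T)^r)
    have n3 : (0:ℝ) ≤ numRadius (T^2) ^ (2*r) := Real.rpow_nonneg (numRadius_nonneg _) _
    linarith
  intro x hx
  have h1 := my_P1 T hr hx
  have h3 := my_P3 T hr hx
  have hd : ‖⟪(T^2) x, x⟫_ℂ‖^r ≤ numRadius (T^2) ^ r :=
    Real.rpow_le_rpow (norm_nonneg _) (le_numRadius (T^2) hx) hr0.le
  have hd2 : (‖⟪(T^2) x, x⟫_ℂ‖^r)^2 ≤ (numRadius (T^2) ^ r)^2 := by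
    have := Real.rpow_nonneg (norm_nonneg (⟪(T^2) x, x⟫_ℂ)) r
    nlinarith
  have e0 : ‖⟪T x, x⟫_ℂ‖ ^ (4*r) = (‖⟪T x, x⟫_ℂ‖ ^ (2*r))^2 := by
    rw [my_sq_rpow (norm_nonneg _) (2*r)]
    congr 1
    ring
  have e1 : (numRadius (T^2) ^ r)^2 = numRadius (T^2) ^ (2*r) :=
    my_sq_rpow (numRadius_nonneg _) r
  have hm0 : (0:ℝ) ≤ ‖⟪T x, x⟫_ℂ‖ ^ (2*r) := Real.rpow_nonneg (norm_nonneg _) _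
  have hsq : (‖⟪T x, x⟫_ℂ‖ ^ (2*r))^2
      ≤ ((((‖T x‖ * ‖adjoint T x‖)^r)^2 + (‖⟪(T^2) x, x⟫_ℂ‖^r)^2))/2 := by
    have hb1 : (‖⟪T x, x⟫_ℂ‖ ^ (2*r))^2
        ≤ (((‖T x‖ * ‖adjoint T x‖)^r + ‖⟪(T^2) x, x⟫_ℂ‖^r)/2)^2 := by
      apply pow_le_pow_left₀ hm0 h1
    nlinarith [sq_nonneg ((‖T x‖ * ‖adjoint T x‖)^r - ‖⟪(T^2) x, x⟫_ℂ‖^r)]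
  rw [e0]
  calc (‖⟪T x, x⟫_ℂ‖ ^ (2*r))^2
      ≤ ((((‖T x‖ * ‖adjoint T x‖)^r)^2 + (‖⟪(T^2) x, x⟫_ℂ‖^r)^2))/2 := hsq
  _ ≤ ((‖(adjoint T * T)^(2*r) + (T * adjoint T)^(2*r)‖/4
        + numRadius ((T * adjoint T)^r * (adjoint T * T)^r)/2) + numRadius (T^2) ^ (2*r))/2 := by
      rw [← e1]
      linarith [h3, hd2]
  _ = ‖(adjoint T * T)^(2*r) + (T * adjoint T)^(2*r)‖/8
        + numRadius ((T * adjoint T)^r * (adjoint T * T)^r)/4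
        + numRadius (T^2) ^ (2*r)/2 := by ring

private lemma my_key_Y (T : H →L[ℂ] H) {r : ℝ} (hr : 1 ≤ r) :
    numRadius T ^ (4*r) ≤
      (‖(adjoint T * T)^r + (T * adjoint T)^r‖/4 + numRadius (T^2) ^ r/2)
        * numRadius T ^ (2*r) := by
  have hr0 : (0:ℝ) < r := by linarith
  have hY0 : (0:ℝ) ≤ ‖(adjoint T * T)^r + (T * adjoint T)^r‖/4 + numRadius (T^2) ^ r/2 := by
    have := Real.rpow_nonneg (numRadius_nonneg (T^2)) r
    have := norm_nonneg ((adjoint T * T)^r + (T * adjoint T)^r)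
    linarith
  refine numRadius_rpow_le T (by positivity) ?_ ?_
  · exact mul_nonneg hY0 (Real.rpow_nonneg (numRadius_nonneg T) _)
  intro x hx
  have h1 := my_P1 T hr hx
  have h2 := my_P2 T hr hx
  have hd : ‖⟪(T^2) x, x⟫_ℂ‖^r ≤ numRadius (T^2) ^ r :=
    Real.rpow_le_rpow (norm_nonneg _) (le_numRadius (T^2) hx) hr0.le
  have hm : ‖⟪T x, x⟫_ℂ‖ ^ (2*r) ≤ numRadius T ^ (2*r) :=
    Real.rpow_le_rpow (norm_nonneg _) (le_numRadius T hx) (by positivity)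
  have e0 : ‖⟪T x, x⟫_ℂ‖ ^ (4*r) = ‖⟪T x, x⟫_ℂ‖ ^ (2*r) * ‖⟪T x, x⟫_ℂ‖ ^ (2*r) := by
    rw [← Real.rpow_add' (norm_nonneg _) (by positivity)]
    congr 1
    ring
  have hm0 : (0:ℝ) ≤ ‖⟪T x, x⟫_ℂ‖ ^ (2*r) := Real.rpow_nonneg (norm_nonneg _) _
  rw [e0]
  calc ‖⟪T x, x⟫_ℂ‖ ^ (2*r) * ‖⟪T x, x⟫_ℂ‖ ^ (2*r)
      ≤ (((‖T x‖ * ‖adjoint T x‖)^r + ‖⟪(T^2) x, x⟫_ℂ‖^r)/2) * numRadius T ^ (2*r) := by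
        apply mul_le_mul h1 hm hm0 (by positivity)
  _ ≤ (‖(adjoint T * T)^r + (T * adjoint T)^r‖/4 + numRadius (T^2) ^ r/2)
        * numRadius T ^ (2*r) := by
      apply mul_le_mul_of_nonneg_right _ (Real.rpow_nonneg (numRadius_nonneg T) _)
      linarith [h2, hd]

end main

theorem stmt5 [CompleteSpace H] (T : H →L[ℂ] H) (a r : ℝ)
    (ha : a ∈ Set.Icc (0:ℝ) 1) (hr : 1 ≤ r) :
    numRadius T ^ (4 * r) ≤
      (a / 8) * ‖opAbs T ^ (4 * r) + opAbs (adjoint T) ^ (4 * r)‖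
        + (a / 4) * numRadius (opAbs (adjoint T) ^ (2 * r) * opAbs T ^ (2 * r))
        + (a / 2) * numRadius (T ^ 2) ^ (2 * r)
        + ((1 - a) / 4) * ‖opAbs T ^ (2 * r) + opAbs (adjoint T) ^ (2 * r)‖
            * numRadius T ^ (2 * r)
        + ((1 - a) / 2) * numRadius (T ^ 2) ^ r * numRadius T ^ (2 * r) := by
  obtain ⟨ha0, ha1⟩ := ha
  have hr0 : (0:ℝ) < r := by linarith
  have e1 : opAbs T ^ (4 * r) = (adjoint T * T) ^ (2*r) := by
    rw [show (4*r:ℝ) = 2*(2*r) by ring]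
    exact my_opAbs_rpow T (by positivity)
  have e2 : opAbs T ^ (2 * r) = (adjoint T * T) ^ r := my_opAbs_rpow T hr0.le
  have e3 : opAbs (adjoint T) ^ (4 * r) = (T * adjoint T) ^ (2*r) := by
    rw [show (4*r:ℝ) = 2*(2*r) by ring, my_opAbs_rpow (adjoint T) (by positivity),
      adjoint_adjoint]
  have e4 : opAbs (adjoint T) ^ (2 * r) = (T * adjoint T) ^ r := by
    rw [my_opAbs_rpow (adjoint T) hr0.le, adjoint_adjoint]
  rw [e1, e2, e3, e4]
  have hX := my_key_X T hr
  have hY := my_key_Y T hr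
  calc numRadius T ^ (4*r)
      = a * (numRadius T ^ (4*r)) + (1-a) * (numRadius T ^ (4*r)) := by ring
  _ ≤ a * (‖(adjoint T * T)^(2*r) + (T * adjoint T)^(2*r)‖/8
        + numRadius ((T * adjoint T)^r * (adjoint T * T)^r)/4
        + numRadius (T^2) ^ (2*r)/2)
      + (1-a) * ((‖(adjoint T * T)^r + (T * adjoint T)^r‖/4 + numRadius (T^2) ^ r/2)
        * numRadius T ^ (2*r)) := by
      exact add_le_add (mul_le_mul_of_nonneg_left hX ha0)
        (mul_le_mul_of_nonneg_left hY (by linarith))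
  _ = _ := by ring
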